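/- Let N be a positive integer, let ã, c ∈ ℝ^N, let ε, R ≥ 0, and let p, q ∈ [1, ∞] with conjugate exponents p*, q*. Then sup over a ∈ B_q(ã, ε) of sup over θ ∈ B_p(c, R) of |aᵀθ| is at most |ãᵀc| + ε‖c‖_{q*} + R‖ã‖_{p*} + C_{p,q} R ε, where C_{p,q} = N^{(1 − 1/p − 1/q)₊}. -/

import Mathlib

open scoped ENNReal
open Matrix

/-- The ℓp-norm on ℝ^N for `p ∈ [1, ∞]` (given as `p : ℝ≥0∞`). -/
noncomputable def lpNorm {N : ℕ} (p : ℝ≥0∞) (v : Fin N → ℝ) : ℝ :=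
  if p = ∞ then ⨆ i, |v i| else (∑ i, |v i| ^ p.toReal) ^ (1 / p.toReal)

lemma lpNorm_top {N : ℕ} (v : Fin N → ℝ) : lpNorm ∞ v = ⨆ i, |v i| := if_pos rfl

lemma lpNorm_ne_top {N : ℕ} {p : ℝ≥0∞} (h : p ≠ ∞) (v : Fin N → ℝ) :
    lpNorm p v = (∑ i, |v i| ^ p.toReal) ^ (1 / p.toReal) := if_neg h

lemma lpNorm_nonneg {N : ℕ} (p : ℝ≥0∞) (v : Fin N → ℝ) : 0 ≤ lpNorm p v := by
  unfold lpNorm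
  split
  · exact Real.iSup_nonneg fun i => abs_nonneg _
  · exact Real.rpow_nonneg
      (Finset.sum_nonneg fun i _ => Real.rpow_nonneg (abs_nonneg _) _) _

lemma one_le_toReal_of {r : ℝ≥0∞} (hr : 1 ≤ r) (hrt : r ≠ ∞) : 1 ≤ r.toReal := by
  rw [← ENNReal.toReal_one]
  exact ENNReal.toReal_mono hrt hr

/-- Hölder's inequality for `lpNorm`. -/
lemma lp_holder {N : ℕ} (p pstar : ℝ≥0∞) (hp : 1 ≤ p)
    (hconj : 1 / p + 1 / pstar = 1) (u v : Fin N → ℝ) :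
    |∑ i, u i * v i| ≤ lpNorm p u * lpNorm pstar v := by
  have habs : |∑ i, u i * v i| ≤ ∑ i, |u i| * |v i| := by
    refine (Finset.abs_sum_le_sum_abs _ _).trans_eq ?_
    simp [abs_mul]
  have hps : 1 ≤ pstar := by
    rw [← ENNReal.inv_le_one, ← one_div]
    calc 1 / pstar ≤ 1 / p + 1 / pstar := le_add_self
      _ = 1 := hconj
  have hp0 : p ≠ 0 := (zero_lt_one.trans_le hp).ne'
  have hps0 : pstar ≠ 0 := (zero_lt_one.trans_le hps).ne'
  by_cases hpt : p = ∞
  · have hps1 : pstar = 1 := by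
      rw [hpt] at hconj
      simp only [one_div, ENNReal.inv_top, zero_add, ENNReal.inv_eq_one] at hconj
      exact hconj
    subst hpt hps1
    rw [lpNorm_top, lpNorm_ne_top ENNReal.one_ne_top]
    simp only [ENNReal.toReal_one, Real.rpow_one, one_div_one]
    refine habs.trans ?_
    calc ∑ i, |u i| * |v i| ≤ ∑ i, (⨆ j, |u j|) * |v i| :=
          Finset.sum_le_sum fun i _ => mul_le_mul_of_nonneg_right
            (le_ciSup (f := fun j => |u j|) (Set.Finite.bddAbove (Set.finite_range _)) i)
            (abs_nonneg _)
      _ = (⨆ j, |u j|) * ∑ i, |v i| := by rw [← Finset.mul_sum]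
  · by_cases hpst : pstar = ∞
    · have hp1 : p = 1 := by
        rw [hpst] at hconj
        simp only [one_div, ENNReal.inv_top, add_zero, ENNReal.inv_eq_one] at hconj
        exact hconj
      subst hpst hp1
      rw [lpNorm_top, lpNorm_ne_top ENNReal.one_ne_top]
      simp only [ENNReal.toReal_one, Real.rpow_one, one_div_one]
      refine habs.trans ?_
      calc ∑ i, |u i| * |v i| ≤ ∑ i, |u i| * (⨆ j, |v j|) :=
            Finset.sum_le_sum fun i _ => mul_le_mul_of_nonneg_left
              (le_ciSup (f := fun j => |v j|) (Set.Finite.bddAbove (Set.finite_range _)) i)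
              (abs_nonneg _)
        _ = (∑ i, |u i|) * ⨆ j, |v j| := by rw [← Finset.sum_mul]
    · -- both finite
      have hpne1 : p ≠ 1 := by
        rintro rfl
        have h1 : (1 : ℝ≥0∞) + 1 / pstar = 1 + 0 := by
          simpa [one_div] using hconj
        exact hpst (by simpa [one_div, ENNReal.inv_eq_zero] using
          (ENNReal.add_right_inj ENNReal.one_ne_top).mp h1)
      have hlt : 1 < p := lt_of_le_of_ne hp (Ne.symm hpne1)
      have hpsne1 : pstar ≠ 1 := by
        rintro rfl
        have h1 : 1 / p + 1 = 0 + 1 := by simpa [one_div] using hconj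
        have h2 : 1 / p = 0 := (ENNReal.add_left_inj ENNReal.one_ne_top).mp h1
        exact hpt (by simpa [one_div, ENNReal.inv_eq_zero] using h2)
      have hlts : 1 < pstar := lt_of_le_of_ne hps (Ne.symm hpsne1)
      have hsum : (1 / p).toReal + (1 / pstar).toReal = 1 := by
        rw [← ENNReal.toReal_add (by simp [one_div, ENNReal.inv_ne_top, hp0])
          (by simp [one_div, ENNReal.inv_ne_top, hps0]), hconj, ENNReal.toReal_one]
      have hconjR : Real.HolderConjugate p.toReal pstar.toReal := by
        constructor
        · simpa [one_div, ENNReal.toReal_inv] using hsum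
        · exact ENNReal.toReal_pos hp0 hpt
        · exact ENNReal.toReal_pos hps0 hpst
      have hH := Real.inner_le_Lp_mul_Lq Finset.univ (fun i => |u i|) (fun i => |v i|) hconjR
      simp only [abs_abs] at hH
      refine habs.trans (hH.trans_eq ?_)
      rw [lpNorm_ne_top hpt, lpNorm_ne_top hpst]

/-- Comparison of `lpNorm`s with different exponents. -/
lemma lpNorm_le_lpNorm {N : ℕ} (hN : 0 < N) (r s : ℝ≥0∞) (hr : 1 ≤ r) (hs : 1 ≤ s)
    (v : Fin N → ℝ) :
    lpNorm r v ≤ (N : ℝ) ^ max ((1 / r).toReal - (1 / s).toReal) 0 * lpNorm s v := by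
  haveI : Nonempty (Fin N) := Fin.pos_iff_nonempty.mp hN
  have hN1 : (1 : ℝ) ≤ (N : ℝ) := by exact_mod_cast hN
  have hr0 : r ≠ 0 := (zero_lt_one.trans_le hr).ne'
  have hs0 : s ≠ 0 := (zero_lt_one.trans_le hs).ne'
  by_cases hst : s = ∞
  · subst hst
    by_cases hrt : r = ∞
    · subst hrt
      have hone : (1 : ℝ) ≤ (N : ℝ) ^ max ((1 / (∞:ℝ≥0∞)).toReal - (1 / (∞:ℝ≥0∞)).toReal) 0 := by
        calc (1:ℝ) = (N:ℝ) ^ (0:ℝ) := (Real.rpow_zero _).symm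
          _ ≤ _ := Real.rpow_le_rpow_of_exponent_le hN1 (le_max_right _ _)
      nlinarith [lpNorm_nonneg (N := N) ∞ v]
    · have hrt1 : 1 ≤ r.toReal := one_le_toReal_of hr hrt
      have hrt0 : r.toReal ≠ 0 := by positivity
      set M : ℝ := ⨆ i, |v i| with hM
      have hM0 : 0 ≤ M := Real.iSup_nonneg fun i => abs_nonneg _
      have hle : ∀ i, |v i| ≤ M := fun i =>
        le_ciSup (f := fun j => |v j|) (Set.Finite.bddAbove (Set.finite_range _)) i
      have hsum : ∑ i, |v i| ^ r.toReal ≤ (N : ℝ) * M ^ r.toReal := by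
        calc ∑ i, |v i| ^ r.toReal ≤ ∑ _i : Fin N, M ^ r.toReal :=
              Finset.sum_le_sum fun i _ =>
                Real.rpow_le_rpow (abs_nonneg _) (hle i) (by positivity)
          _ = (N : ℝ) * M ^ r.toReal := by
              simp [Finset.sum_const, mul_comm]
      rw [lpNorm_ne_top hrt, lpNorm_top]
      have hexp : max ((1 / r).toReal - (1 / (∞:ℝ≥0∞)).toReal) 0 = 1 / r.toReal := by
        have h0 : (1 / (∞:ℝ≥0∞)).toReal = 0 := by simp
        have h1 : (1 / r).toReal = 1 / r.toReal := by
          simp [one_div, ENNReal.toReal_inv]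
        rw [h0, sub_zero, h1, max_eq_left (by positivity)]
      rw [hexp]
      calc (∑ i, |v i| ^ r.toReal) ^ (1 / r.toReal)
          ≤ ((N : ℝ) * M ^ r.toReal) ^ (1 / r.toReal) :=
            Real.rpow_le_rpow (Finset.sum_nonneg fun i _ => by positivity) hsum
              (by positivity)
        _ = (N : ℝ) ^ (1 / r.toReal) * M := by
            rw [Real.mul_rpow (by positivity) (by positivity), one_div,
              Real.rpow_rpow_inv hM0 hrt0]
  · have hst1 : 1 ≤ s.toReal := one_le_toReal_of hs hst
    have hst0' : (0:ℝ) < s.toReal := by linarith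
    by_cases hrt : r = ∞
    · subst hrt
      have hexp : max ((1 / (∞:ℝ≥0∞)).toReal - (1 / s).toReal) 0 = 0 := by
        apply max_eq_right
        simp only [one_div, ENNReal.inv_top, ENNReal.toReal_zero, zero_sub, ENNReal.toReal_inv]
        exact neg_nonpos.mpr (by positivity)
      rw [hexp, Real.rpow_zero, one_mul, lpNorm_top, lpNorm_ne_top hst]
      refine ciSup_le fun i => ?_
      have h1 : |v i| ^ s.toReal ≤ ∑ j, |v j| ^ s.toReal :=
        Finset.single_le_sum (f := fun j => |v j| ^ s.toReal)
          (fun j _ => by positivity) (Finset.mem_univ i)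
      calc |v i| = (|v i| ^ s.toReal) ^ (1 / s.toReal) := by
            rw [one_div, Real.rpow_rpow_inv (abs_nonneg _) (by positivity)]
        _ ≤ (∑ j, |v j| ^ s.toReal) ^ (1 / s.toReal) :=
            Real.rpow_le_rpow (by positivity) h1 (by positivity)
    · -- both finite
      have hrt1 : 1 ≤ r.toReal := one_le_toReal_of hr hrt
      have hrt0' : (0:ℝ) < r.toReal := by linarith
      have hexp : (1 / r).toReal - (1 / s).toReal = 1 / r.toReal - 1 / s.toReal := by
        simp [one_div, ENNReal.toReal_inv]
      rw [lpNorm_ne_top hrt, lpNorm_ne_top hst]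
      rcases le_or_gt s.toReal r.toReal with hle | hlt
      · -- monotonicity, constant 1
        have hexp0 : max ((1 / r).toReal - (1 / s).toReal) 0 = 0 := by
          apply max_eq_right
          rw [hexp]
          have h1 : 1 / r.toReal ≤ 1 / s.toReal := one_div_le_one_div_of_le hst0' hle
          linarith
        rw [hexp0, Real.rpow_zero, one_mul]
        set T : ℝ := (∑ i, |v i| ^ s.toReal) ^ (1 / s.toReal) with hT
        have hT0 : 0 ≤ T := by positivity
        have hTs : T ^ s.toReal = ∑ i, |v i| ^ s.toReal := by
          rw [hT, one_div, Real.rpow_inv_rpow (by positivity) (by positivity)]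
        have hvi : ∀ i, |v i| ≤ T := by
          intro i
          have h1 : |v i| ^ s.toReal ≤ ∑ j, |v j| ^ s.toReal :=
            Finset.single_le_sum (f := fun j => |v j| ^ s.toReal)
              (fun j _ => by positivity) (Finset.mem_univ i)
          calc |v i| = (|v i| ^ s.toReal) ^ (1 / s.toReal) := by
                rw [one_div, Real.rpow_rpow_inv (abs_nonneg _) (by positivity)]
            _ ≤ T := Real.rpow_le_rpow (by positivity) h1 (by positivity)
        have hsum : ∑ i, |v i| ^ r.toReal ≤ T ^ r.toReal := by
          calc ∑ i, |v i| ^ r.toReal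
              = ∑ i, |v i| ^ (r.toReal - s.toReal) * |v i| ^ s.toReal := by
                refine Finset.sum_congr rfl fun i _ => ?_
                rw [← Real.rpow_add' (abs_nonneg _)
                  (by rw [sub_add_cancel]; positivity), sub_add_cancel]
            _ ≤ ∑ i, T ^ (r.toReal - s.toReal) * |v i| ^ s.toReal := by
                refine Finset.sum_le_sum fun i _ =>
                  mul_le_mul_of_nonneg_right ?_ (by positivity)
                exact Real.rpow_le_rpow (abs_nonneg _) (hvi i) (by linarith)
            _ = T ^ (r.toReal - s.toReal) * ∑ i, |v i| ^ s.toReal := by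
                rw [← Finset.mul_sum]
            _ = T ^ r.toReal := by
                rw [← hTs, ← Real.rpow_add' hT0
                  (by rw [sub_add_cancel]; positivity), sub_add_cancel]
        calc (∑ i, |v i| ^ r.toReal) ^ (1 / r.toReal)
            ≤ (T ^ r.toReal) ^ (1 / r.toReal) :=
              Real.rpow_le_rpow (by positivity) hsum (by positivity)
          _ = T := by rw [one_div, Real.rpow_rpow_inv hT0 (by positivity)]
      · -- r < s : Hölder with weight 1
        have hδ : (0:ℝ) < 1 / r.toReal - 1 / s.toReal := by
          have h1 := one_div_lt_one_div_of_lt hrt0' hlt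
          linarith
        have hexp0 : max ((1 / r).toReal - (1 / s).toReal) 0
            = 1 / r.toReal - 1 / s.toReal := by
          rw [hexp]
          exact max_eq_left hδ.le
        rw [hexp0]
        have hp1 : 1 ≤ s.toReal / r.toReal := ((one_lt_div hrt0').mpr hlt).le
        have hhold := Real.inner_le_weight_mul_Lp_of_nonneg (ι := Fin N) Finset.univ
          (p := s.toReal / r.toReal) hp1 (fun _ => (1:ℝ)) (fun i => |v i| ^ r.toReal)
          (fun _ => zero_le_one) (fun i => by positivity)
        simp only [one_mul, Finset.sum_const, Finset.card_univ, Fintype.card_fin,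
          nsmul_eq_mul, mul_one, inv_div] at hhold
        have hpow : ∀ i, (|v i| ^ r.toReal) ^ (s.toReal / r.toReal) = |v i| ^ s.toReal := by
          intro i
          rw [← Real.rpow_mul (abs_nonneg _)]
          congr 1
          field_simp
        rw [Finset.sum_congr rfl (fun i _ => hpow i)] at hhold
        -- hhold : ∑ |v i|^rt ≤ N ^ (1 - rt/st) * (∑ |v i|^st) ^ (rt/st)
        set A : ℝ := ∑ i, |v i| ^ s.toReal with hA
        have hA0 : 0 ≤ A := Finset.sum_nonneg fun i _ => by positivity
        calc (∑ i, |v i| ^ r.toReal) ^ (1 / r.toReal)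
            ≤ ((N:ℝ) ^ (1 - r.toReal / s.toReal) * A ^ (r.toReal / s.toReal))
                ^ (1 / r.toReal) :=
              Real.rpow_le_rpow (by positivity) hhold (by positivity)
          _ = (N : ℝ) ^ (1 / r.toReal - 1 / s.toReal) * A ^ (1 / s.toReal) := by
              rw [Real.mul_rpow (by positivity) (by positivity),
                ← Real.rpow_mul (by positivity : (0:ℝ) ≤ (N:ℝ)),
                ← Real.rpow_mul hA0]
              congr 1
              · congr 1
                field_simp
              · congr 1
                field_simp

/-- The mixed Hölder-type bound with dimension factor. -/
lemma dot_bound {N : ℕ} (hN : 0 < N) (p q pstar : ℝ≥0∞) (hp : 1 ≤ p) (hq : 1 ≤ q)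
    (hpconj : 1 / p + 1 / pstar = 1) (u v : Fin N → ℝ) :
    |u ⬝ᵥ v| ≤ (N : ℝ) ^ max (1 - (1 / p).toReal - (1 / q).toReal) 0
      * lpNorm q u * lpNorm p v := by
  have hps : 1 ≤ pstar := by
    rw [← ENNReal.inv_le_one, ← one_div]
    calc 1 / pstar ≤ 1 / p + 1 / pstar := le_add_self
      _ = 1 := hpconj
  have hp0 : p ≠ 0 := (zero_lt_one.trans_le hp).ne'
  have hps0 : pstar ≠ 0 := (zero_lt_one.trans_le hps).ne'
  have hsum : (1 / p).toReal + (1 / pstar).toReal = 1 := by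
    rw [← ENNReal.toReal_add (by simp [one_div, ENNReal.inv_ne_top, hp0])
      (by simp [one_div, ENNReal.inv_ne_top, hps0]), hpconj, ENNReal.toReal_one]
  have h1 : |u ⬝ᵥ v| ≤ lpNorm pstar u * lpNorm p v := by
    have h := lp_holder pstar p hps (by rw [add_comm]; exact hpconj) u v
    simpa [dotProduct] using h
  have h2 : lpNorm pstar u ≤ (N : ℝ) ^ max ((1 / pstar).toReal - (1 / q).toReal) 0
      * lpNorm q u := lpNorm_le_lpNorm hN pstar q hps hq u
  have hE : max ((1 / pstar).toReal - (1 / q).toReal) 0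
      = max (1 - (1 / p).toReal - (1 / q).toReal) 0 := by
    congr 1
    linarith
  rw [hE] at h2
  calc |u ⬝ᵥ v| ≤ lpNorm pstar u * lpNorm p v := h1
    _ ≤ ((N : ℝ) ^ max (1 - (1 / p).toReal - (1 / q).toReal) 0 * lpNorm q u)
        * lpNorm p v := mul_le_mul_of_nonneg_right h2 (lpNorm_nonneg _ _)

/-- Stable sphere test bound: the sup over `a ∈ B_q(ã, ε)` of the sup over
`θ ∈ B_p(c, R)` of `|aᵀθ|` is at most
`|ãᵀc| + ε‖c‖_{q*} + R‖ã‖_{p*} + C_{p,q} R ε` with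
`C_{p,q} = N^{(1 − 1/p − 1/q)₊}`. -/
theorem stable_sphere_test_bound (N : ℕ) (hN : 0 < N) (atil c : Fin N → ℝ)
    (ε R : ℝ) (hε : 0 ≤ ε) (hR : 0 ≤ R) (p pstar q qstar : ℝ≥0∞)
    (hp : 1 ≤ p) (hq : 1 ≤ q)
    (hpconj : 1 / p + 1 / pstar = 1) (hqconj : 1 / q + 1 / qstar = 1) :
    sSup {x : ℝ | ∃ a : Fin N → ℝ, lpNorm q (a - atil) ≤ ε ∧
        x = sSup {t : ℝ | ∃ θ : Fin N → ℝ, lpNorm p (θ - c) ≤ R ∧ t = |a ⬝ᵥ θ|}}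
      ≤ |atil ⬝ᵥ c| + ε * lpNorm qstar c + R * lpNorm pstar atil
        + (N : ℝ) ^ max (1 - (1 / p).toReal - (1 / q).toReal) 0 * R * ε := by
  set C : ℝ := (N : ℝ) ^ max (1 - (1 / p).toReal - (1 / q).toReal) 0 with hC
  have hC0 : 0 ≤ C := Real.rpow_nonneg (Nat.cast_nonneg N) _
  have hc0 : 0 ≤ lpNorm qstar c := lpNorm_nonneg _ _
  have ha0 : 0 ≤ lpNorm pstar atil := lpNorm_nonneg _ _
  have hB : 0 ≤ |atil ⬝ᵥ c| + ε * lpNorm qstar c + R * lpNorm pstar atil + C * R * ε := by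
    positivity
  refine Real.sSup_le ?_ hB
  rintro x ⟨a, ha, rfl⟩
  refine Real.sSup_le ?_ hB
  rintro t ⟨θ, hθ, rfl⟩
  have hq0 : 0 ≤ lpNorm q (a - atil) := lpNorm_nonneg _ _
  have hp0 : 0 ≤ lpNorm p (θ - c) := lpNorm_nonneg _ _
  have hdecomp : a ⬝ᵥ θ
      = atil ⬝ᵥ c + atil ⬝ᵥ (θ - c) + ((a - atil) ⬝ᵥ c + (a - atil) ⬝ᵥ (θ - c)) := by
    simp only [sub_dotProduct, dotProduct_sub]
    ring
  have habs : |a ⬝ᵥ θ| ≤ |atil ⬝ᵥ c| + |atil ⬝ᵥ (θ - c)|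
      + |(a - atil) ⬝ᵥ c| + |(a - atil) ⬝ᵥ (θ - c)| := by
    rw [hdecomp]
    calc |atil ⬝ᵥ c + atil ⬝ᵥ (θ - c) + ((a - atil) ⬝ᵥ c + (a - atil) ⬝ᵥ (θ - c))|
        ≤ |atil ⬝ᵥ c + atil ⬝ᵥ (θ - c)| + |(a - atil) ⬝ᵥ c + (a - atil) ⬝ᵥ (θ - c)| :=
          abs_add_le _ _
      _ ≤ |atil ⬝ᵥ c| + |atil ⬝ᵥ (θ - c)| + (|(a - atil) ⬝ᵥ c| + |(a - atil) ⬝ᵥ (θ - c)|) :=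
          add_le_add (abs_add_le _ _) (abs_add_le _ _)
      _ = _ := by ring
  have hb1 : |atil ⬝ᵥ (θ - c)| ≤ lpNorm pstar atil * R := by
    have hps : 1 ≤ pstar := by
      rw [← ENNReal.inv_le_one, ← one_div]
      calc 1 / pstar ≤ 1 / p + 1 / pstar := le_add_self
        _ = 1 := hpconj
    have h := lp_holder pstar p hps (by rw [add_comm]; exact hpconj) atil (θ - c)
    have h2 : |atil ⬝ᵥ (θ - c)| ≤ lpNorm pstar atil * lpNorm p (θ - c) := by
      simpa [dotProduct] using h
    exact h2.trans (mul_le_mul_of_nonneg_left hθ ha0)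
  have hb2 : |(a - atil) ⬝ᵥ c| ≤ ε * lpNorm qstar c := by
    have h := lp_holder q qstar hq hqconj (a - atil) c
    have h2 : |(a - atil) ⬝ᵥ c| ≤ lpNorm q (a - atil) * lpNorm qstar c := by
      simpa [dotProduct] using h
    exact h2.trans (mul_le_mul_of_nonneg_right ha hc0)
  have hb3 : |(a - atil) ⬝ᵥ (θ - c)| ≤ C * ε * R := by
    have h2 := dot_bound hN p q pstar hp hq hpconj (a - atil) (θ - c)
    rw [← hC] at h2
    calc |(a - atil) ⬝ᵥ (θ - c)| ≤ C * lpNorm q (a - atil) * lpNorm p (θ - c) := h2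
      _ ≤ C * ε * lpNorm p (θ - c) :=
          mul_le_mul_of_nonneg_right (mul_le_mul_of_nonneg_left ha hC0) hp0
      _ ≤ C * ε * R := mul_le_mul_of_nonneg_left hθ (by positivity)
  nlinarith [hb1, hb2, hb3, habs]
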